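/- Let H and K be Hilbert spaces, let A and T be positive bounded self-adjoint operators on H, and let ε > 0. Then (A + εI)⁻¹A − (T + εI)⁻¹T = ε (A + εI)⁻¹ (A − T) (T + εI)⁻¹. Consequently, for every bounded linear operator S : K → H and every 0 < β ≤ 1 (with T^β defined by the continuous functional calculus), ‖[(A + εI)⁻¹A − (T + εI)⁻¹T] T^{β} S‖ ≤ ε^{β−1} ‖A − T‖ ‖S‖. -/

import Mathlib

set_option maxHeartbeats 1000000
set_option synthInstance.maxHeartbeats 200000

open ContinuousLinearMap in
private lemma aux_spec {H : Type*} [NormedAddCommGroup H] [InnerProductSpace ℂ H]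
    [CompleteSpace H] (T : H →L[ℂ] H) (hT : T.IsPositive) :
    ∀ x ∈ spectrum ℝ T, 0 ≤ x :=
  fun _ hx => spectrum_nonneg_of_nonneg ((T.nonneg_iff_isPositive).mpr hT) hx

private lemma aux_contOn {H : Type*} [NormedAddCommGroup H] [InnerProductSpace ℂ H]
    [CompleteSpace H] (T : H →L[ℂ] H) (hT : T.IsPositive) {ε : ℝ} (hε : 0 < ε) :
    ContinuousOn (fun x : ℝ => (x + ε)⁻¹) (spectrum ℝ T) := by
  apply ContinuousOn.inv₀ (by fun_prop)
  intro x hx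
  have := aux_spec T hT x hx
  positivity

private lemma aux_add_eq {H : Type*} [NormedAddCommGroup H] [InnerProductSpace ℂ H]
    [CompleteSpace H] (T : H →L[ℂ] H) (hT : T.IsPositive) (ε : ℝ) :
    T + ε • 1 = cfc (fun x : ℝ => x + ε) T := by
  have hsa := hT.isSelfAdjoint
  rw [cfc_add T (fun x : ℝ => x) (fun _ : ℝ => ε) (by fun_prop) (by fun_prop),
    cfc_id' ℝ T hsa, cfc_const ε T hsa, Algebra.algebraMap_eq_smul_one]

private lemma aux_isUnit {H : Type*} [NormedAddCommGroup H] [InnerProductSpace ℂ H]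
    [CompleteSpace H] (T : H →L[ℂ] H) (hT : T.IsPositive) {ε : ℝ} (hε : 0 < ε) :
    IsUnit (T + ε • 1) := by
  rw [aux_add_eq T hT ε]
  refine isUnit_cfc (fun x : ℝ => x + ε) T (by fun_prop) hT.isSelfAdjoint fun x hx => ?_
  have := aux_spec T hT x hx
  positivity

private lemma aux_inv {H : Type*} [NormedAddCommGroup H] [InnerProductSpace ℂ H]
    [CompleteSpace H] (T : H →L[ℂ] H) (hT : T.IsPositive) {ε : ℝ} (hε : 0 < ε) :
    Ring.inverse (T + ε • 1) = cfc (fun x : ℝ => (x + ε)⁻¹) T := by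
  have hsa := hT.isSelfAdjoint
  have hu := aux_isUnit T hT hε
  have hmul : cfc (fun x : ℝ => (x + ε)⁻¹) T * (T + ε • 1) = 1 := by
    rw [aux_add_eq T hT ε,
      ← cfc_mul (fun x : ℝ => (x + ε)⁻¹) (fun x : ℝ => x + ε) T (aux_contOn T hT hε)
        (by fun_prop)]
    rw [cfc_congr (g := fun _ : ℝ => (1 : ℝ)) fun x hx => by
      have := aux_spec T hT x hx
      field_simp]
    rw [cfc_const 1 T hsa, map_one]
  calc Ring.inverse (T + ε • 1)
      = 1 * Ring.inverse (T + ε • 1) := (one_mul _).symm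
    _ = cfc (fun x : ℝ => (x + ε)⁻¹) T * (T + ε • 1) * Ring.inverse (T + ε • 1) := by
        rw [hmul]
    _ = cfc (fun x : ℝ => (x + ε)⁻¹) T * ((T + ε • 1) * Ring.inverse (T + ε • 1)) := by
        rw [mul_assoc]
    _ = cfc (fun x : ℝ => (x + ε)⁻¹) T := by rw [Ring.mul_inverse_cancel _ hu, mul_one]

private lemma aux_inv_norm {H : Type*} [NormedAddCommGroup H] [InnerProductSpace ℂ H]
    [CompleteSpace H] (T : H →L[ℂ] H) (hT : T.IsPositive) {ε : ℝ} (hε : 0 < ε) :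
    ‖Ring.inverse (T + ε • 1)‖ ≤ ε⁻¹ := by
  rw [aux_inv T hT hε]
  refine norm_cfc_le (by positivity) fun x hx => ?_
  have hx0 := aux_spec T hT x hx
  rw [Real.norm_eq_abs, abs_of_nonneg (by positivity)]
  rw [inv_le_inv₀ (by linarith) hε]
  linarith

theorem stmt11
    {H K : Type*}
    [NormedAddCommGroup H] [InnerProductSpace ℂ H] [CompleteSpace H]
    [NormedAddCommGroup K] [InnerProductSpace ℂ K] [CompleteSpace K]
    (A T : H →L[ℂ] H) (hA : A.IsPositive) (hT : T.IsPositive)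
    (ε : ℝ) (hε : 0 < ε) :
    IsUnit (A + ε • 1) ∧ IsUnit (T + ε • 1) ∧
    Ring.inverse (A + ε • 1) * A - Ring.inverse (T + ε • 1) * T
      = ε • (Ring.inverse (A + ε • 1) * (A - T) * Ring.inverse (T + ε • 1)) ∧
    (∀ (S : K →L[ℂ] H) (β : ℝ), 0 < β → β ≤ 1 →
      ‖(Ring.inverse (A + ε • 1) * A - Ring.inverse (T + ε • 1) * T).comp
          ((cfc (fun x : ℝ => x ^ β) T).comp S)‖
        ≤ ε ^ (β - 1) * ‖A - T‖ * ‖S‖) := by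
  have hAu := aux_isUnit A hA hε
  have hTu := aux_isUnit T hT hε
  set U := Ring.inverse (A + ε • 1) with hU
  set V := Ring.inverse (T + ε • 1) with hV
  have hUl : U * (A + ε • 1) = 1 := Ring.inverse_mul_cancel _ hAu
  have hVr : (T + ε • 1) * V = 1 := Ring.mul_inverse_cancel _ hTu
  -- T commutes with V
  have hTV : V * T = T * V := by
    obtain ⟨u, hu⟩ := hTu
    have hc : Commute T ↑u := by
      rw [hu]
      show T * (T + ε • 1) = (T + ε • 1) * T
      simp only [mul_add, add_mul, mul_smul_comm, smul_mul_assoc, mul_one, one_mul]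
    have := (hc.units_inv_right).symm
    rw [hV, ← hu, Ring.inverse_unit]
    exact this.eq
  -- the commutation identity
  have e3 : A * (T + ε • 1) - (A + ε • 1) * T = ε • (A - T) := by
    simp only [mul_add, add_mul, mul_smul_comm, smul_mul_assoc, mul_one, one_mul, smul_sub]
    abel
  have key : U * A - V * T = ε • (U * (A - T) * V) := by
    have e1 : U * A = U * (A * (T + ε • 1)) * V := by
      calc U * A = U * A * ((T + ε • 1) * V) := by rw [hVr, mul_one]
        _ = U * (A * (T + ε • 1)) * V := by noncomm_ring
    have e2 : V * T = U * ((A + ε • 1) * T) * V := by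
      calc V * T = T * V := hTV
        _ = (U * (A + ε • 1)) * (T * V) := by rw [hUl, one_mul]
        _ = U * ((A + ε • 1) * T) * V := by noncomm_ring
    calc U * A - V * T = U * (A * (T + ε • 1)) * V - U * ((A + ε • 1) * T) * V := by
          rw [← e1, ← e2]
      _ = U * (A * (T + ε • 1) - (A + ε • 1) * T) * V := by noncomm_ring
      _ = U * (ε • (A - T)) * V := by rw [e3]
      _ = ε • (U * (A - T) * V) := by
          simp [mul_smul_comm, smul_mul_assoc]
  refine ⟨hAu, hTu, key, fun S β hβ hβ1 => ?_⟩
  -- norm bound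
  have hsaT := hT.isSelfAdjoint
  have hcβ : ContinuousOn (fun x : ℝ => x ^ β) (spectrum ℝ T) := fun x _ =>
    (Real.continuousAt_rpow_const x β (Or.inr hβ.le)).continuousWithinAt
  have hVf : V * cfc (fun x : ℝ => x ^ β) T = cfc (fun x : ℝ => (x + ε)⁻¹ * x ^ β) T := by
    rw [hV, aux_inv T hT hε,
      ← cfc_mul (fun x : ℝ => (x + ε)⁻¹) (fun x : ℝ => x ^ β) T (aux_contOn T hT hε) hcβ]
  have hg_norm : ‖cfc (fun x : ℝ => (x + ε)⁻¹ * x ^ β) T‖ ≤ ε ^ (β - 1) := by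
    refine norm_cfc_le (Real.rpow_nonneg hε.le _) fun x hx => ?_
    have hx0 := aux_spec T hT x hx
    have hxε : (0:ℝ) < x + ε := by linarith
    rw [Real.norm_eq_abs, abs_of_nonneg (by positivity)]
    calc (x + ε)⁻¹ * x ^ β ≤ (x + ε)⁻¹ * (x + ε) ^ β := by
          have := Real.rpow_le_rpow hx0 (by linarith : x ≤ x + ε) hβ.le
          exact mul_le_mul_of_nonneg_left this (by positivity)
      _ = (x + ε) ^ (β - 1) := by
          rw [Real.rpow_sub hxε, Real.rpow_one, inv_mul_eq_div]
      _ ≤ ε ^ (β - 1) := Real.rpow_le_rpow_of_nonpos hε (by linarith) (by linarith)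
  have hcomp : (U * A - V * T).comp ((cfc (fun x : ℝ => x ^ β) T).comp S)
      = (ε • (U * (A - T) * cfc (fun x : ℝ => (x + ε)⁻¹ * x ^ β) T)).comp S := by
    rw [← ContinuousLinearMap.comp_assoc]
    congr 1
    rw [key]
    show (ε • (U * (A - T) * V)) * cfc (fun x : ℝ => x ^ β) T = _
    rw [smul_mul_assoc, mul_assoc, hVf]
  rw [hcomp]
  calc ‖(ε • (U * (A - T) * cfc (fun x : ℝ => (x + ε)⁻¹ * x ^ β) T)).comp S‖
      ≤ ‖ε • (U * (A - T) * cfc (fun x : ℝ => (x + ε)⁻¹ * x ^ β) T)‖ * ‖S‖ :=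
        ContinuousLinearMap.opNorm_comp_le _ _
    _ = ε * ‖U * (A - T) * cfc (fun x : ℝ => (x + ε)⁻¹ * x ^ β) T‖ * ‖S‖ := by
        rw [norm_smul, Real.norm_eq_abs, abs_of_pos hε]
    _ ≤ ε * (‖U‖ * ‖A - T‖ * ‖cfc (fun x : ℝ => (x + ε)⁻¹ * x ^ β) T‖) * ‖S‖ := by
        have h1 : ‖U * (A - T) * cfc (fun x : ℝ => (x + ε)⁻¹ * x ^ β) T‖
            ≤ ‖U * (A - T)‖ * ‖cfc (fun x : ℝ => (x + ε)⁻¹ * x ^ β) T‖ := norm_mul_le _ _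
        have h2 : ‖U * (A - T)‖ ≤ ‖U‖ * ‖A - T‖ := norm_mul_le _ _
        have := h1.trans (mul_le_mul_of_nonneg_right h2 (norm_nonneg _))
        gcongr
    _ ≤ ε * (ε⁻¹ * ‖A - T‖ * ε ^ (β - 1)) * ‖S‖ := by
        have hUn : ‖U‖ ≤ ε⁻¹ := aux_inv_norm A hA hε
        gcongr
    _ = ε ^ (β - 1) * ‖A - T‖ * ‖S‖ := by
        field_simp
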